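/- Let S ⊂ H be in general position (for any distinct a,b ∈ S and all i, a_i ≠ b_i), and let T ⊆ S with |T| > n. Then the cell V_T = {x ∈ H : D_S(x) = T} is empty, where D_S(x) = {b ∈ S : d_△(x,b) = min_{c∈S} d_△(x,c)}. -/
import Mathlib


noncomputable def tmin {n : ℕ} [NeZero n] (f : Fin n → ℝ) : ℝ :=
  Finset.univ.inf' Finset.univ_nonempty f

noncomputable def dtri {n : ℕ} [NeZero n] (a b : Fin n → ℝ) : ℝ :=
  (∑ i, (b i - a i)) - n * tmin (fun i => b i - a i)

theorem stmt19 {n : ℕ} [NeZero n] (S : Set (Fin n → ℝ))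
    (hSH : ∀ s ∈ S, ∑ i, s i = 0)
    (hdisc : ∀ x : Fin n → ℝ, ¬ AccPt x (Filter.principal S))
    (hgen : ∀ a ∈ S, ∀ b ∈ S, a ≠ b → ∀ i, a i ≠ b i)
    (T : Set (Fin n → ℝ)) (hTS : T ⊆ S)
    (hcard : ∃ T' : Finset (Fin n → ℝ), ↑T' ⊆ T ∧ n < T'.card) :
    {x : Fin n → ℝ | (∑ i, x i = 0) ∧
      {b ∈ S | ∀ c ∈ S, dtri x b ≤ dtri x c} = T} = ∅ := by
  ext x
  simp only [Set.mem_setOf_eq, Set.mem_empty_iff_false, iff_false]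
  rintro ⟨hx, hT⟩
  obtain ⟨T', hT'T, hcardT'⟩ := hcard
  have hmem : ∀ b ∈ T', b ∈ S ∧ ∀ c ∈ S, dtri x b ≤ dtri x c := by
    intro b hb
    have hbT : b ∈ T := hT'T hb
    rw [← hT] at hbT
    exact ⟨hbT.1, hbT.2⟩
  -- choose an argmin coordinate for each point
  have hargmin : ∀ b : Fin n → ℝ, ∃ i : Fin n, ∀ j, b i - x i ≤ b j - x j := by
    intro b
    obtain ⟨i, _, hi⟩ := Finset.exists_min_image Finset.univ
      (fun i => b i - x i) Finset.univ_nonempty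
    exact ⟨i, fun j => hi j (Finset.mem_univ j)⟩
  choose g hg using hargmin
  have htmin : ∀ b : Fin n → ℝ, tmin (fun j => b j - x j) = b (g b) - x (g b) := by
    intro b
    apply le_antisymm
    · exact Finset.inf'_le _ (Finset.mem_univ (g b))
    · exact Finset.le_inf' _ _ (fun j _ => hg b j)
  have hsum : ∀ b ∈ S, (∑ i, (b i - x i)) = 0 := by
    intro b hb
    rw [Finset.sum_sub_distrib, hSH b hb, hx, sub_zero]
  have hdtri : ∀ b ∈ S, dtri x b = -(n * (b (g b) - x (g b))) := by
    intro b hb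
    rw [dtri, hsum b hb, htmin b, zero_sub]
  -- pigeonhole
  obtain ⟨b, hb, b', hb', hne, heq⟩ :=
    Finset.exists_ne_map_eq_of_card_lt_of_maps_to
      (s := T') (t := (Finset.univ : Finset (Fin n)))
      (by simpa using hcardT') (fun b _ => Finset.mem_univ (g b))
  obtain ⟨hbS, hbmin⟩ := hmem b hb
  obtain ⟨hb'S, hb'min⟩ := hmem b' hb'
  have hEq : dtri x b = dtri x b' :=
    le_antisymm (hbmin b' hb'S) (hb'min b hbS)
  rw [hdtri b hbS, hdtri b' hb'S, neg_inj] at hEq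
  have hn : (n : ℝ) ≠ 0 := Nat.cast_ne_zero.mpr (NeZero.ne n)
  have := mul_left_cancel₀ hn hEq
  rw [heq] at this
  exact hgen b hbS b' hb'S hne (g b') (by linarith)
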